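/- (Agresti-type bound) Consider a Galton–Watson branching process whose offspring distribution is Binomial(s, 1/(λt)) with mean μ = s/(λt) ≥ 1. Then for every k > 0, the probability that the process survives to generation k is at least 1/(k+1). -/

import Mathlib

/-- Agresti-type bound: for a Galton–Watson process with `Binomial(s, p)` offspring,
`p = 1/(λ t)`, and mean `s p ≥ 1`, the survival probability to generation `k`,
expressed via the iterated probability generating function `f x = (1 - p + p x)^s`
as `1 - f^[k] 0`, is at least `1/(k+1)`. -/
theorem stmt3 (s t : ℕ) (lam p : ℝ) (hlam : lam ∈ Set.Ioo (0 : ℝ) 1)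
    (hp : p = 1 / (lam * t)) (hp0 : 0 < p) (hp1 : p ≤ 1) (hmean : 1 ≤ (s : ℝ) * p)
    (f : ℝ → ℝ) (hf : ∀ x, f x = (1 - p + p * x) ^ s) (k : ℕ) (hk : 0 < k) :
    1 / ((k : ℝ) + 1) ≤ 1 - f^[k] 0 := by
  have key : ∀ n : ℕ, 0 ≤ f^[n] 0 ∧ f^[n] 0 ≤ 1 - 1/((n:ℝ)+1) := by
    intro n
    induction n with
    | zero => simp
    | succ n ih =>
      obtain ⟨h0, h1⟩ := ih
      have hn1 : (0:ℝ) < (n:ℝ) + 1 := by positivity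
      rw [Function.iterate_succ_apply', hf]
      have hb : (0:ℝ) ≤ 1 - p + p * f^[n] 0 := by nlinarith
      refine ⟨by positivity, ?_⟩
      set u : ℝ := 1/((n:ℝ)+1) with hu
      have hu0 : 0 < u := by positivity
      have hu1 : u ≤ 1 := by
        rw [hu, div_le_one hn1]; linarith [Nat.cast_nonneg (α := ℝ) n]
      have hmono : (1 - p + p * f^[n] 0)^s ≤ (1 - p*u)^s := by
        apply pow_le_pow_left₀ hb
        nlinarith
      have h1a : (0:ℝ) ≤ 1 - p*u := by nlinarith
      have h2 : (1 - p*u)^s ≤ (Real.exp (-(p*u)))^s := by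
        apply pow_le_pow_left₀ h1a
        linarith [Real.add_one_le_exp (-(p*u))]
      have h3 : (Real.exp (-(p*u)))^s = Real.exp (-((s:ℝ)*p*u)) := by
        rw [← Real.exp_nat_mul]; ring_nf
      have h4 : Real.exp (-((s:ℝ)*p*u)) ≤ Real.exp (-u) := by
        apply Real.exp_le_exp.2
        nlinarith
      have h5 : Real.exp (-u) ≤ 1 - 1/((n:ℝ)+1+1) := by
        have he : 1 + u ≤ Real.exp u := by linarith [Real.add_one_le_exp u]
        have hexp : Real.exp (-u) * Real.exp u = 1 := by
          rw [← Real.exp_add]; simp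
        have hepos : 0 < Real.exp u := Real.exp_pos u
        have h6 : Real.exp (-u) ≤ 1/(1+u) := by
          rw [le_div_iff₀ (by linarith)]
          nlinarith [Real.exp_pos (-u)]
        have h7 : 1/(1+u) = 1 - 1/((n:ℝ)+1+1) := by
          rw [hu]
          field_simp
          ring
        linarith
      push_cast
      calc (1 - p + p * f^[n] 0)^s ≤ (1 - p*u)^s := hmono
        _ ≤ (Real.exp (-(p*u)))^s := h2
        _ = Real.exp (-((s:ℝ)*p*u)) := h3
        _ ≤ Real.exp (-u) := h4
        _ ≤ 1 - 1/((n:ℝ)+1+1) := h5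
  have := (key k).2
  linarith
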